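/- For every classical instance I = (A, ι^n) of unsigned strings, the string A can be transformed into ι^n by a sequence of at most b_τ(I) + |Σ_{ι^n} \ Σ_A| transpositions, insertions, and deletions; that is, d_{M^{φψ}_τ}(A, ι^n) ≤ b_τ(I) + |Σ_{ι^n} \ Σ_A|. -/

import Mathlib

/-- A gene of the origin string: either a label in `{1, …, n}` (`some x`) or an
`α`-element (`none`), i.e. a gene absent from the target genome. -/
abbrev Gene := Option ℕ

/-- `A` is a valid origin string for a classical instance `I = (A, ι^n)`:
all its labels lie in `{1, …, n}` and each label occurs at most once
(`α`-elements may repeat). -/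
def ValidString (n : ℕ) (A : List Gene) : Prop :=
  (∀ x : ℕ, some x ∈ A → 1 ≤ x ∧ x ≤ n) ∧ (∀ x : ℕ, A.count (some x) ≤ 1)

/-- The extended version of `A`: `A_0 = 0` and `A_{|A|+1} = n+1` are appended. -/
def extStr (n : ℕ) (A : List Gene) : List Gene :=
  some 0 :: (A ++ [some (n + 1)])

/-- `|Σ_{ι^n} \ Σ_A|`: the number of labels of the target absent from `A`. -/
def missingCount (n : ℕ) (A : List Gene) : ℕ :=
  ((Finset.Icc 1 n).filter (fun x => some x ∉ A)).card

/-- `posterior(x, I)`: the smallest common label greater than `x`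
(`n+1` if there is none, `α` for `x = α`). -/
def postOf (n : ℕ) (A : List Gene) : Gene → Gene
  | none => none
  | some x =>
    if h : ((Finset.Icc 1 n).filter (fun y => some y ∈ A ∧ x < y)).Nonempty then
      some (((Finset.Icc 1 n).filter (fun y => some y ∈ A ∧ x < y)).min' h)
    else
      some (n + 1)

/-- `anterior(x, I)`: the largest common label smaller than `x`
(`0` if there is none, `α` for `x = α`). -/
def antOf (n : ℕ) (A : List Gene) : Gene → Gene
  | none => none
  | some x =>
    if h : ((Finset.Icc 1 n).filter (fun y => some y ∈ A ∧ y < x)).Nonempty then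
      some (((Finset.Icc 1 n).filter (fun y => some y ∈ A ∧ y < x)).max' h)
    else
      some 0

/-- `b_τ(I)`: the number of transposition breakpoints of the instance `I = (A, ι^n)`. -/
def bT (n : ℕ) (A : List Gene) : ℕ :=
  ((Finset.range (A.length + 1)).filter (fun t =>
    (extStr n A).getD (t + 1) none ≠ postOf n A ((extStr n A).getD t none))).card

/-- `b_ρ(I)`: the number of unsigned-reversal breakpoints of the instance `I = (A, ι^n)`. -/
def bR (n : ℕ) (A : List Gene) : ℕ :=
  ((Finset.range (A.length + 1)).filter (fun t =>
    (extStr n A).getD (t + 1) none ≠ postOf n A ((extStr n A).getD t none) ∧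
    (extStr n A).getD (t + 1) none ≠ antOf n A ((extStr n A).getD t none))).card

/-- The reversal `ρ(i,j)`, `1 ≤ i ≤ j ≤ |A|`, with explicit parameters `i`, `j`:
it reverses the segment `(A_i … A_j)`, transforming `A` into `A'`. -/
def RevAt (A : List Gene) (i j : ℕ) (A' : List Gene) : Prop :=
  1 ≤ i ∧ i ≤ j ∧ j ≤ A.length ∧
  A' = A.take (i - 1) ++ ((A.drop (i - 1)).take (j - i + 1)).reverse ++ A.drop j

/-- `A'` is obtained from `A` by a reversal. -/
def RevN (A A' : List Gene) : Prop := ∃ i j : ℕ, RevAt A i j A'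

/-- `A'` is obtained from `A` by a transposition `τ(i,j,k)`, `1 ≤ i < j < k ≤ |A|+1`,
exchanging the adjacent segments `(A_i … A_{j−1})` and `(A_j … A_{k−1})`. -/
def TranspN (A A' : List Gene) : Prop :=
  ∃ i j k : ℕ, 1 ≤ i ∧ i < j ∧ j < k ∧ k ≤ A.length + 1 ∧
    A' = A.take (i - 1) ++ (A.drop (j - 1)).take (k - j) ++
         (A.drop (i - 1)).take (j - i) ++ A.drop (k - 1)

/-- `A'` is obtained from `A` by an insertion `φ(i,σ)`: a nonempty repetition-free
string `σ`, consisting only of labels of `Σ_{ι^n} \ Σ_A`, is inserted after position `i`. -/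
def InsN (n : ℕ) (A A' : List Gene) : Prop :=
  ∃ (i : ℕ) (σ : List Gene), i ≤ A.length ∧ σ ≠ [] ∧ σ.Nodup ∧
    (∀ e ∈ σ, ∃ x : ℕ, e = some x ∧ 1 ≤ x ∧ x ≤ n ∧ some x ∉ A) ∧
    A' = A.take i ++ σ ++ A.drop i

/-- `A'` is obtained from `A` by a deletion `ψ(i,j)`: the segment `(A_i … A_j)`,
consisting only of `α`-elements, is removed. -/
def DelN (A A' : List Gene) : Prop :=
  ∃ i j : ℕ, 1 ≤ i ∧ i ≤ j ∧ j ≤ A.length ∧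
    (∀ e ∈ (A.drop (i - 1)).take (j - i + 1), e = none) ∧
    A' = A.take (i - 1) ++ A.drop j

/-- The kinds of operations on strings. -/
inductive StrOp : Type
  | rev
  | transp
  | ins
  | del
deriving DecidableEq

def strOpRel (n : ℕ) : StrOp → List Gene → List Gene → Prop
  | StrOp.rev => RevN
  | StrOp.transp => TranspN
  | StrOp.ins => InsN n
  | StrOp.del => DelN

/-- The target string `ι^n = (1 2 … n)`. -/
def idList (n : ℕ) : List Gene := (List.range n).map (fun x => some (x + 1))

/-- `A` can be transformed into `ι^n` by a sequence of `s` operations of the model `M`. -/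
def Reaches (n : ℕ) (M : Set StrOp) : ℕ → List Gene → Prop
  | 0, A => A = idList n
  | s + 1, A => ∃ op ∈ M, ∃ A', strOpRel n op A A' ∧ Reaches n M s A'

/-- `d_M(A, ι^n)`: the minimum number of operations of the model `M` transforming
`A` into `ι^n` (`∞` if no such sequence exists). -/
noncomputable def distM (n : ℕ) (M : Set StrOp) (A : List Gene) : ℕ∞ :=
  sInf {c : ℕ∞ | ∃ s : ℕ, Reaches n M s A ∧ c = (s : ℕ∞)}

/-- The model `M^{φψ}_ρ`: reversals, insertions and deletions. -/
def Mrev : Set StrOp := {StrOp.rev, StrOp.ins, StrOp.del}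
/-- The model `M^{φψ}_τ`: transpositions, insertions and deletions. -/
def Mtra : Set StrOp := {StrOp.transp, StrOp.ins, StrOp.del}
/-- The model `M^{φψ}_{ρ,τ}`: reversals, transpositions, insertions and deletions. -/
def Mrevtra : Set StrOp := {StrOp.rev, StrOp.transp, StrOp.ins, StrOp.del}

/-- `(u, v)` is an unsigned-reversal breakpoint of the instance `I = (A, ι^n)`. -/
def IsBreakR (n : ℕ) (A : List Gene) (u v : Gene) : Prop :=
  v ≠ postOf n A u ∧ v ≠ antOf n A u

/-- `A` has at least one decreasing strip: either some non-breakpoint adjacency is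
decreasing (the right element is the anterior of the left one), or some interior
non-`α` element is a singleton strip (it has breakpoints on both sides). -/
def HasDecStrip (n : ℕ) (A : List Gene) : Prop :=
  (∃ t : ℕ, t + 1 < (extStr n A).length ∧
    (extStr n A).getD t none ≠ none ∧
    (extStr n A).getD (t + 1) none = antOf n A ((extStr n A).getD t none)) ∨
  (∃ t : ℕ, 1 ≤ t ∧ t + 1 < (extStr n A).length ∧
    (extStr n A).getD t none ≠ none ∧
    IsBreakR n A ((extStr n A).getD (t - 1) none) ((extStr n A).getD t none) ∧
    IsBreakR n A ((extStr n A).getD t none) ((extStr n A).getD (t + 1) none))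

/-! breakpoint counter -/

def bpc (f : Gene → Gene) : List Gene → ℕ
  | a :: b :: l => (if f a = b then 0 else 1) + bpc f (b :: l)
  | _ => 0

lemma bpc_nil (f : Gene → Gene) : bpc f [] = 0 := rfl
lemma bpc_single (f : Gene → Gene) (a : Gene) : bpc f [a] = 0 := rfl
lemma bpc_cons₂ (f : Gene → Gene) (a b : Gene) (l : List Gene) :
    bpc f (a :: b :: l) = (if f a = b then 0 else 1) + bpc f (b :: l) := rfl

lemma bpc_split (f : Gene → Gene) :
    ∀ (xs : List Gene) (a : Gene) (ys : List Gene),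
      bpc f (xs ++ a :: ys) = bpc f (xs ++ [a]) + bpc f (a :: ys) := by
  intro xs
  induction xs with
  | nil => intro a ys; simp [bpc_single]
  | cons x xs ih =>
    intro a ys
    cases xs with
    | nil => simp [bpc_cons₂, bpc_single, Nat.add_comm]
    | cons x' xs' =>
      have h1 : (x :: x' :: xs') ++ a :: ys = x :: x' :: (xs' ++ a :: ys) := by simp
      have h2 : (x :: x' :: xs') ++ [a] = x :: x' :: (xs' ++ [a]) := by simp
      rw [h1, h2, bpc_cons₂, bpc_cons₂]
      have := ih a ys
      simp only [List.cons_append] at this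
      omega

lemma bpc_eq_zero_of_chain (f : Gene → Gene) :
    ∀ l : List Gene, List.IsChain (fun a b => f a = b) l → bpc f l = 0 := by
  intro l
  induction l with
  | nil => intro _; rfl
  | cons a t ih =>
    intro h
    cases t with
    | nil => rfl
    | cons b t' =>
      rw [bpc_cons₂]
      have h1 := List.isChain_cons_cons.mp h
      rw [if_pos h1.1, ih h1.2]

lemma chain_of_bpc_zero (f : Gene → Gene) :
    ∀ l : List Gene, bpc f l = 0 → List.IsChain (fun a b => f a = b) l := by
  intro l
  induction l with
  | nil => intro _; simp
  | cons a t ih =>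
    intro h
    cases t with
    | nil => simp
    | cons b t' =>
      rw [bpc_cons₂] at h
      refine List.isChain_cons_cons.mpr ⟨?_, ih (by omega)⟩
      by_contra hc
      rw [if_neg hc] at h; omega

lemma card_filter_eq_countP (k : ℕ) (p : ℕ → Prop) [DecidablePred p] :
    ((Finset.range k).filter p).card = (List.range k).countP (fun t => decide (p t)) := by
  induction k with
  | zero => simp
  | succ k ih =>
    rw [Finset.range_add_one, Finset.filter_insert, List.range_succ, List.countP_append]
    by_cases hp : p k
    · rw [if_pos hp, Finset.card_insert_of_notMem (by simp)]
      simp [hp, ih]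
    · rw [if_neg hp]
      simp [hp, ih]

lemma countP_range_bpc (f : Gene → Gene) :
    ∀ l : List Gene,
      (List.range (l.length - 1)).countP
        (fun t => decide (l.getD (t+1) none ≠ f (l.getD t none))) = bpc f l := by
  intro l
  induction l with
  | nil => simp [bpc_nil]
  | cons a t ih =>
    cases t with
    | nil => simp [bpc_single]
    | cons b t' =>
      have hlen : (a :: b :: t').length - 1 = ((b :: t').length - 1) + 1 := by
        simp
      rw [hlen, List.range_succ_eq_map, List.countP_cons, List.countP_map, bpc_cons₂]
      have h0 : (fun t => decide ((a :: b :: t').getD (t+1) none ≠ f ((a :: b :: t').getD t none)))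
          ∘ Nat.succ = fun t => decide ((b :: t').getD (t+1) none ≠ f ((b :: t').getD t none)) := by
        funext t
        simp [Function.comp, List.getD_cons_succ]
      rw [h0, ih]
      by_cases hc : f a = b
      · simp [hc]
      · simp [hc]
        rw [if_neg (fun h => hc h.symm)]
        omega

lemma bT_eq_bpc (n : ℕ) (A : List Gene) :
    bT n A = bpc (postOf n A) (extStr n A) := by
  have hlen : (extStr n A).length - 1 = A.length + 1 := by simp [extStr]
  rw [bT, card_filter_eq_countP, ← countP_range_bpc (postOf n A) (extStr n A), hlen]

/-! postOf helpers -/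


lemma postOf_some (n : ℕ) (A : List Gene) (x : ℕ) :
    postOf n A (some x)
      = if h : ((Finset.Icc 1 n).filter (fun y => some y ∈ A ∧ x < y)).Nonempty then
          some (((Finset.Icc 1 n).filter (fun y => some y ∈ A ∧ x < y)).min' h)
        else
          some (n + 1) := rfl

lemma post_none (n : ℕ) (A : List Gene) : postOf n A none = none := rfl

lemma post_isSome (n : ℕ) (A : List Gene) (x : ℕ) :
    ∃ b, postOf n A (some x) = some b := by
  rw [postOf_some]
  split <;> exact ⟨_, rfl⟩

lemma post_cases (n : ℕ) (A : List Gene) (x b : ℕ)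
    (h : postOf n A (some x) = some b) :
    (b ∈ Finset.Icc 1 n ∧ some b ∈ A ∧ x < b)
    ∨ (b = n + 1 ∧ ∀ g ∈ Finset.Icc 1 n, some g ∈ A → ¬ x < g) := by
  rw [postOf_some] at h
  split at h
  · rename_i hne
    left
    have hmem := Finset.min'_mem _ hne
    rw [Finset.mem_filter] at hmem
    have hb : b = Finset.min' _ hne := by injection h; omega
    subst hb
    exact ⟨hmem.1, hmem.2.1, hmem.2.2⟩
  · rename_i hne
    right
    have hb : b = n + 1 := by injection h; omega
    refine ⟨hb, fun g hg hgA hxg => hne ⟨g, Finset.mem_filter.mpr ⟨hg, hgA, hxg⟩⟩⟩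

lemma post_le (n : ℕ) (A : List Gene) (x b g : ℕ)
    (h : postOf n A (some x) = some b)
    (hg : g ∈ Finset.Icc 1 n) (hgA : some g ∈ A) (hxg : x < g) : b ≤ g := by
  rw [postOf_some] at h
  split at h
  · rename_i hne
    have hb : b = Finset.min' _ hne := by injection h; omega
    subst hb
    exact Finset.min'_le _ _ (Finset.mem_filter.mpr ⟨hg, hgA, hxg⟩)
  · rename_i hne
    exact absurd ⟨g, Finset.mem_filter.mpr ⟨hg, hgA, hxg⟩⟩ hne

lemma post_gt (n : ℕ) (A : List Gene) (x b : ℕ) (hx : x ≤ n)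
    (h : postOf n A (some x) = some b) : x < b := by
  rcases post_cases n A x b h with ⟨_, _, h3⟩ | ⟨h1, _⟩
  · exact h3
  · omega

lemma post_congr (n : ℕ) (A A' : List Gene)
    (h : ∀ x : ℕ, some x ∈ A ↔ some x ∈ A') : postOf n A = postOf n A' := by
  funext g
  cases g with
  | none => rfl
  | some x =>
    have hset : (Finset.Icc 1 n).filter (fun y => some y ∈ A ∧ x < y)
        = (Finset.Icc 1 n).filter (fun y => some y ∈ A' ∧ x < y) := by
      apply Finset.filter_congr
      intro y _
      rw [h y]
    rw [postOf_some, postOf_some]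
    simp only [hset]

lemma missing_congr (n : ℕ) (A A' : List Gene)
    (h : ∀ x : ℕ, some x ∈ A ↔ some x ∈ A') : missingCount n A = missingCount n A' := by
  unfold missingCount
  congr 1
  apply Finset.filter_congr
  intro y _
  rw [h y]

/-! chain lemmas -/

lemma mcp (f : Gene → Gene) :
    ∀ l : List Gene, l ≠ [] → ∃ (c : List Gene) (e : Gene) (r : List Gene),
      l = c ++ e :: r ∧ List.IsChain (fun a b => f a = b) (c ++ [e]) ∧
      (r = [] ∨ ∃ s r', r = s :: r' ∧ f e ≠ s) := by
  intro l
  induction l with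
  | nil => intro h; exact absurd rfl h
  | cons a t ih =>
    intro _
    cases t with
    | nil => exact ⟨[], a, [], rfl, List.isChain_singleton a, Or.inl rfl⟩
    | cons b t' =>
      by_cases hab : f a = b
      · obtain ⟨c, e, r, heq, hch, hbr⟩ := ih (by simp)
        refine ⟨a :: c, e, r, by simp [heq], ?_, hbr⟩
        cases c with
        | nil =>
          have : e = b := by have := congrArg (fun l => l.headI) heq; simpa using this.symm
          subst this
          exact List.isChain_pair.mpr hab
        | cons c0 c' =>
          have hc0 : c0 = b := by have := congrArg (fun l => l.headI) heq; simpa using this.symm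
          subst hc0
          exact List.IsChain.cons_cons hab hch
      · exact ⟨[], a, b :: t', rfl, List.isChain_singleton a, Or.inr ⟨b, t', rfl, hab⟩⟩

lemma cov (n : ℕ) (A : List Gene) :
    ∀ L : List Gene, List.IsChain (fun a b => postOf n A a = b) L →
      ∀ (hne : L ≠ []) (hv : ℕ), L.head hne = some hv →
      ∀ g : ℕ, g ∈ Finset.Icc 1 n → some g ∈ A → hv < g →
      some g ∈ L ∨ ∃ lv, L.getLast hne = some lv ∧ lv < g := by
  intro L
  induction L with
  | nil => intro _ hne; exact absurd rfl hne
  | cons x L' ih =>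
    intro hch hne hv hhead g hg hgA hlt
    cases L' with
    | nil =>
      right
      exact ⟨hv, by simpa using hhead, hlt⟩
    | cons x' L'' =>
      have hstep : postOf n A x = x' := (List.isChain_cons_cons.mp hch).1
      have hx : x = some hv := hhead
      subst hx
      obtain ⟨b, hb⟩ := post_isSome n A hv
      have hx' : x' = some b := by rw [← hstep, hb]
      have hble : b ≤ g := post_le n A hv b g hb hg hgA hlt
      by_cases hbg : b = g
      · left
        rw [← hbg, ← hx']
        simp
      · have hblt : b < g := by omega
        have := ih (List.isChain_cons_cons.mp hch).2 (by simp) b (by simp [hx']) g hg hgA hblt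
        rcases this with h | ⟨lv, hlast, hlv⟩
        · left; exact List.mem_cons_of_mem _ h
        · right
          exact ⟨lv, by rw [List.getLast_cons (by simp)]; exact hlast, hlv⟩

lemma lastmax (n : ℕ) (A : List Gene) :
    ∀ L : List Gene, List.IsChain (fun a b => postOf n A a = b) L →
      (∀ e ∈ L, ∃ v, e = some v ∧ v ≤ n) →
      ∀ (hne : L ≠ []) (a : ℕ), some a ∈ L →
      ∃ lv, L.getLast hne = some lv ∧ a ≤ lv := by
  intro L
  induction L with
  | nil => intro _ _ hne; exact absurd rfl hne
  | cons x L' ih =>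
    intro hch hbd hne a hmem
    cases L' with
    | nil =>
      refine ⟨a, ?_, le_refl a⟩
      simp only [List.mem_singleton] at hmem
      simp [← hmem]
    | cons x' L'' =>
      have hstep : postOf n A x = x' := (List.isChain_cons_cons.mp hch).1
      have hlast : (x :: x' :: L'').getLast hne = (x' :: L'').getLast (by simp) :=
        List.getLast_cons (by simp)
      rcases List.mem_cons.mp hmem with h | h
      · obtain ⟨v, hxv, hvn⟩ := hbd x (by simp)
        rw [hxv] at h
        have hav : a = v := Option.some.inj h
        subst hav
        rw [hxv] at hstep
        obtain ⟨b, hb⟩ := post_isSome n A a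
        have hx' : x' = some b := by rw [← hstep, hb]
        have hab : a < b := post_gt n A a b hvn hb
        obtain ⟨lv, hl, hle⟩ := ih (List.isChain_cons_cons.mp hch).2
          (fun e he => hbd e (List.mem_cons_of_mem _ he)) (by simp) b (by simp [hx'])
        exact ⟨lv, by rw [hlast]; exact hl, by omega⟩
      · obtain ⟨lv, hl, hle⟩ := ih (List.isChain_cons_cons.mp hch).2
          (fun e he => hbd e (List.mem_cons_of_mem _ he)) (by simp) a h
        exact ⟨lv, by rw [hlast]; exact hl, hle⟩

/-! case 1 : deletion -/

lemma runsplit : ∀ l : List Gene, ∃ N Y, l = N ++ Y ∧ (∀ e ∈ N, e = none) ∧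
    (Y = [] ∨ ∃ y0 Y', Y = y0 :: Y' ∧ y0 ≠ none) := by
  intro l
  induction l with
  | nil => exact ⟨[], [], rfl, by simp, Or.inl rfl⟩
  | cons a t ih =>
    by_cases ha : a = none
    · obtain ⟨N, Y, heq, hN, hY⟩ := ih
      exact ⟨a :: N, Y, by simp [heq], by simp [ha]; exact hN, hY⟩
    · exact ⟨[], a :: t, rfl, by simp, Or.inr ⟨a, t, rfl, ha⟩⟩

lemma split3 : ∀ A : List Gene, none ∈ A → ∃ X N Y, A = X ++ N ++ Y ∧
    (∀ e ∈ X, e ≠ none) ∧ N ≠ [] ∧ (∀ e ∈ N, e = none) ∧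
    (Y = [] ∨ ∃ y0 Y', Y = y0 :: Y' ∧ y0 ≠ none) := by
  intro A
  induction A with
  | nil => intro h; simp at h
  | cons a t ih =>
    intro hmem
    by_cases ha : a = none
    · obtain ⟨N, Y, heq, hN, hY⟩ := runsplit t
      exact ⟨[], a :: N, Y, by simp [heq], by simp, by simp, by simp [ha]; exact hN, hY⟩
    · have ht : none ∈ t := by
        rcases List.mem_cons.mp hmem with h | h
        · exact absurd h.symm ha
        · exact h
      obtain ⟨X, N, Y, heq, hX, hN, hNe, hY⟩ := ih ht
      exact ⟨a :: X, N, Y, by simp [heq], by simp [ha]; exact hX, hN, hNe, hY⟩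

lemma runbp (n : ℕ) (A : List Gene) (v : Gene) (hv : v ≠ none) :
    ∀ N' : List Gene, (∀ e ∈ N', e = none) →
      1 ≤ bpc (postOf n A) ((none : Gene) :: (N' ++ [v])) := by
  intro N'
  induction N' with
  | nil =>
    intro _
    rw [List.nil_append, bpc_cons₂]
    rw [if_neg (by rw [post_none]; exact fun h => hv h.symm)]
    omega
  | cons e N'' ih =>
    intro hall
    have he : e = none := hall e (by simp)
    subst he
    rw [List.cons_append, bpc_cons₂]
    have := ih (fun e' he' => hall e' (by simp [he']))
    omega

lemma getLast_ne_none (P : List Gene) (hne : P ≠ []) (h : ∀ e ∈ P, e ≠ none) :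
    P.getLast hne ≠ none := h _ (List.getLast_mem hne)

lemma case_del (n : ℕ) (A : List Gene) (hA : ValidString n A) (hmem : none ∈ A) :
    ∃ A', DelN A A' ∧ ValidString n A' ∧ missingCount n A' = missingCount n A ∧
      bT n A' < bT n A := by
  obtain ⟨X, N, Y, heq, hX, hNe, hN, hY⟩ := split3 A hmem
  refine ⟨X ++ Y, ⟨X.length + 1, X.length + N.length, by omega, by have := List.length_pos_iff.mpr hNe; omega, ?_, ?_, ?_⟩, ?_, ?_, ?_⟩
  · rw [heq]; simp
  · intro e he
    apply hN
    have h1 : X.length + 1 - 1 = X.length := by omega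
    rw [h1, heq, List.append_assoc, List.drop_left] at he
    have h2 : X.length + N.length - (X.length + 1) + 1 = N.length := by
      have : 1 ≤ N.length := List.length_pos_iff.mpr hNe
      omega
    rw [h2, List.take_left] at he
    exact he
  · have h1 : X.length + 1 - 1 = X.length := by omega
    rw [h1, heq, List.append_assoc, List.take_left]
    have h2 : X.length + N.length = (X ++ N).length := by simp
    rw [← List.append_assoc, h2, List.drop_left]
  · constructor
    · intro x hx
      apply hA.1
      rw [heq]
      simp at hx ⊢
      tauto
    · intro x
      refine le_trans (List.Sublist.count_le _ ?_) (hA.2 x)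
      rw [heq, List.append_assoc]
      exact List.Sublist.append_left (List.sublist_append_right N Y) X
  · apply missing_congr
    intro x
    rw [heq]
    simp only [List.mem_append]
    constructor
    · rintro (h | h); · tauto
      · tauto
    · rintro ((h | h) | h)
      · tauto
      · exact absurd (hN _ h) (by simp)
      · tauto
  · -- breakpoint count decreases
    have hmemiff : ∀ x : ℕ, some x ∈ (X ++ Y) ↔ some x ∈ A := by
      intro x
      rw [heq]
      simp only [List.mem_append]
      constructor
      · tauto
      · rintro ((h | h) | h)
        · tauto
        · exact absurd (hN _ h) (by simp)
        · tauto
    have hpost : postOf n (X ++ Y) = postOf n A := post_congr n _ _ hmemiff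
    set f := postOf n A with hf
    set q : Gene := some (n + 1) with hq
    set P : List Gene := some 0 :: X with hP
    have hPne : P ≠ [] := by simp [hP]
    have hPnn : ∀ e ∈ P, e ≠ none := by
      intro e he
      rcases List.mem_cons.mp he with h | h
      · simp [h]
      · exact hX e h
    set u : Gene := P.getLast hPne with hu
    set M : List Gene := P.dropLast with hM
    have hPME : M ++ [u] = P := List.dropLast_append_getLast hPne
    have hun : u ≠ none := getLast_ne_none P hPne hPnn
    obtain ⟨uv, huv⟩ : ∃ uv, u = some uv := Option.ne_none_iff_exists'.mp hun
    -- v :: W  :=  Y ++ [q]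
    obtain ⟨v, W, hvW, hvn⟩ : ∃ v W, Y ++ [q] = v :: W ∧ v ≠ none := by
      rcases hY with h | ⟨y0, Y', hY', hy0⟩
      · exact ⟨q, [], by simp [h], by simp [hq]⟩
      · exact ⟨y0, Y' ++ [q], by simp [hY'], hy0⟩
    have hextA : extStr n A = M ++ [u] ++ (N ++ (v :: W)) := by
      rw [extStr, heq, hPME, hP, ← hvW]
      simp [hq]
    have hextA' : extStr n (X ++ Y) = M ++ [u] ++ (v :: W) := by
      rw [extStr, hPME, hP, ← hvW]
      simp [hq]
    -- compute bT A
    obtain ⟨n0, N', hN0⟩ : ∃ n0 N', N = n0 :: N' := by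
      cases N with
      | nil => exact absurd rfl hNe
      | cons a b => exact ⟨a, b, rfl⟩
    have hn0 : n0 = none := hN _ (by rw [hN0]; simp)
    have e1 : bT n A = bpc f (M ++ [u]) + bpc f (u :: (N ++ (v :: W))) := by
      rw [bT_eq_bpc, hextA, List.append_assoc M [u], List.singleton_append, bpc_split]
    have e2 : bpc f (u :: (N ++ (v :: W))) = bpc f ((u :: N) ++ [v]) + bpc f (v :: W) := by
      have h1 : u :: (N ++ (v :: W)) = (u :: N) ++ v :: W := by simp
      rw [h1, bpc_split]
    have e3 : 2 ≤ bpc f ((u :: N) ++ [v]) := by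
      rw [hN0, hn0]
      have h1 : (u :: none :: N') ++ [v] = u :: (none :: (N' ++ [v])) := by simp
      rw [h1, bpc_cons₂]
      have hfu : f u ≠ none := by
        rw [huv, hf]
        obtain ⟨b, hb⟩ := post_isSome n A uv
        rw [hb]; simp
      rw [if_neg (fun h => hfu h)]
      have h2 := runbp n A v hvn N' (fun e he => hN e (by rw [hN0]; simp [he]))
      rw [← hf] at h2
      omega
    have e4 : bT n (X ++ Y) = bpc f (M ++ [u]) + ((if f u = v then 0 else 1) + bpc f (v :: W)) := by
      rw [bT_eq_bpc, hpost, hextA', List.append_assoc M [u], List.singleton_append, bpc_split,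
        bpc_cons₂]
    have e5 : (if f u = v then 0 else 1) ≤ 1 := by split <;> omega
    omega

open List

/-! case 3 : insertion -/

def ltv (a b : Gene) : Prop := a.getD 0 < b.getD 0

instance : IsTrans Gene ltv := ⟨fun _ _ _ h1 h2 => lt_trans h1 h2⟩
instance : IsAntisymm Gene ltv := ⟨fun _ _ h1 h2 => (lt_asymm h1 h2).elim⟩

lemma count_eq_count (a : Gene) (l : List Gene) :
    @List.count Gene instBEqOfDecidableEq a l = @List.count (Option ℕ) Option.instBEq a l := by
  induction l with
  | nil => rfl
  | cons b t ih =>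
    rw [@List.count_cons Gene instBEqOfDecidableEq, @List.count_cons (Option ℕ) Option.instBEq, ih]
    by_cases h : b = a <;> simp [h]

lemma nodup_of_valid (n : ℕ) (A : List Gene) (hA : ValidString n A) (hnone : none ∉ A) :
    A.Nodup := by
  apply List.nodup_iff_count_le_one.mpr
  intro a
  cases a with
  | none => simp [List.count_eq_zero_of_not_mem hnone]
  | some x => exact hA.2 x

lemma nodup_ext (n : ℕ) (A : List Gene) (hA : ValidString n A) (hnone : none ∉ A) :
    (extStr n A).Nodup := by
  rw [extStr]
  refine List.Nodup.cons ?_ (List.nodup_append'.mpr ⟨nodup_of_valid n A hA hnone, List.nodup_singleton _, ?_⟩)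
  · intro h
    rcases List.mem_append.mp h with h | h
    · exact absurd (hA.1 0 h).1 (by omega)
    · simp at h
  · intro a ha hb
    simp only [List.mem_singleton] at hb
    subst hb
    exact absurd (hA.1 (n+1) ha).2 (by omega)

lemma mem_ext_some (n : ℕ) (A : List Gene) (hnone : none ∉ A) :
    ∀ e ∈ extStr n A, ∃ v, e = some v := by
  intro e he
  rw [extStr] at he
  rcases List.mem_cons.mp he with h | h
  · exact ⟨0, h⟩
  · rcases List.mem_append.mp h with h | h
    · cases e with
      | none => exact absurd h hnone
      | some v => exact ⟨v, rfl⟩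
    · simp at h; exact ⟨n+1, h⟩

lemma chainlt (n : ℕ) (A : List Gene) :
    ∀ l : List Gene, List.IsChain (fun a b => postOf n A a = b) l →
      (∀ e ∈ l.dropLast, ∃ v, e = some v ∧ v ≤ n) →
      List.IsChain ltv l := by
  intro l
  induction l with
  | nil => intro _ _; simp
  | cons a t ih =>
    intro hch hbd
    cases t with
    | nil => simp
    | cons b t' =>
      obtain ⟨va, hva, hvan⟩ := hbd a (by rw [List.dropLast_cons_of_ne_nil (by simp)]; simp)
      have hstep : postOf n A a = b := (List.isChain_cons_cons.mp hch).1
      rw [hva] at hstep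
      obtain ⟨vb, hvb⟩ := post_isSome n A va
      have hb : b = some vb := by rw [← hstep, hvb]
      refine List.isChain_cons_cons.mpr ⟨?_, ih (List.isChain_cons_cons.mp hch).2 ?_⟩
      · rw [hva, hb]
        exact post_gt n A va vb hvan hvb
      · intro e he
        apply hbd
        rw [List.dropLast_cons_of_ne_nil (by simp)]
        exact List.mem_cons_of_mem _ he

lemma dropLast_ext (n : ℕ) (A : List Gene) :
    (extStr n A).dropLast = some 0 :: A := by
  rw [extStr, List.dropLast_cons_of_ne_nil (by simp)]
  simp

lemma pairwise_ext (n : ℕ) (A : List Gene) (hA : ValidString n A) (hnone : none ∉ A)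
    (hbt : bT n A = 0) : List.Pairwise ltv (extStr n A) := by
  rw [← List.isChain_iff_pairwise]
  apply chainlt n A
  · exact chain_of_bpc_zero _ _ (by rw [← bT_eq_bpc]; exact hbt)
  · rw [dropLast_ext]
    intro e he
    rcases List.mem_cons.mp he with h | h
    · exact ⟨0, h, by omega⟩
    · cases e with
      | none => exact absurd h hnone
      | some v => exact ⟨v, rfl, (hA.1 v h).2⟩

lemma sorted_bT_zero (n : ℕ) (B : List Gene) (hB : ValidString n B) (hnone : none ∉ B)
    (hpw : List.Pairwise ltv (extStr n B)) : bT n B = 0 := by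
  rw [bT_eq_bpc]
  apply bpc_eq_zero_of_chain
  suffices h : ∀ (l₂ l₁ : List Gene), extStr n B = l₁ ++ l₂ →
      List.IsChain (fun a b => postOf n B a = b) l₂ by
    exact h (extStr n B) [] rfl
  intro l₂
  induction l₂ with
  | nil => intro _ _; simp
  | cons a t ih =>
    intro l₁ hsplit
    cases t with
    | nil => simp
    | cons b t' =>
      refine List.isChain_cons_cons.mpr ⟨?_, ih (l₁ ++ [a]) (by simp [hsplit])⟩
      have hpw' : List.Pairwise ltv (l₁ ++ a :: b :: t') := hsplit ▸ hpw
      obtain ⟨pw1, pw2, cross⟩ := List.pairwise_append.mp hpw'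
      obtain ⟨va, hva⟩ := mem_ext_some n B hnone a (by rw [hsplit]; simp)
      obtain ⟨vb, hvb⟩ := mem_ext_some n B hnone b (by rw [hsplit]; simp)
      have hab : va < vb := by
        have := (List.pairwise_cons.mp pw2).1 b (by simp)
        rw [hva, hvb] at this
        exact this
      have hbt' : ∀ g ∈ t', ltv b g := (List.pairwise_cons.mp (List.pairwise_cons.mp pw2).2).1
      -- key: any common label > va is ≥ vb
      have hmin : ∀ g : ℕ, g ∈ Finset.Icc 1 n → some g ∈ B → va < g → vb ≤ g := by
        intro g hg hgB hvag
        have hgext : (some g : Gene) ∈ l₁ ++ a :: b :: t' := by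
          rw [← hsplit, extStr]
          simp [hgB]
        rcases List.mem_append.mp hgext with h | h
        · have := cross _ h a (by simp)
          rw [hva] at this
          have : g < va := this
          omega
        · rcases List.mem_cons.mp h with h | h
          · rw [hva] at h
            have : g = va := by injection h
            omega
          · rcases List.mem_cons.mp h with h | h
            · rw [hvb] at h
              have : g = vb := by injection h
              omega
            · have := hbt' _ h
              rw [hvb] at this
              have : vb < g := this
              omega
      rw [hva, hvb, postOf_some]
      by_cases hvbn : vb ≤ n
      · -- b is a common label
        have hbB : (some vb : Gene) ∈ B := by
          have hbe : b ∈ extStr n B := by rw [hsplit]; simp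
          rw [extStr] at hbe
          rcases List.mem_cons.mp hbe with h | h
          · rw [hvb] at h
            have : vb = 0 := by injection h
            omega
          · rcases List.mem_append.mp h with h | h
            · rw [← hvb]; exact h
            · simp [hvb] at h; omega
        have hvb1 : 1 ≤ vb := (hB.1 vb hbB).1
        have hmem : vb ∈ (Finset.Icc 1 n).filter (fun y => some y ∈ B ∧ va < y) :=
          Finset.mem_filter.mpr ⟨Finset.mem_Icc.mpr ⟨hvb1, hvbn⟩, hbB, hab⟩
        rw [dif_pos ⟨vb, hmem⟩]
        congr 1
        refine le_antisymm (Finset.min'_le _ _ hmem) (Finset.le_min' _ _ _ ?_)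
        intro g hgm
        rw [Finset.mem_filter] at hgm
        exact hmin g hgm.1 hgm.2.1 hgm.2.2
      · -- vb = n+1 : empty filter
        have hvbe : vb = n + 1 := by
          have hbe : b ∈ extStr n B := by rw [hsplit]; simp
          rw [extStr] at hbe
          rcases List.mem_cons.mp hbe with h | h
          · rw [hvb] at h
            have : vb = 0 := by injection h
            omega
          · rcases List.mem_append.mp h with h | h
            · exact absurd (hB.1 vb (hvb ▸ h)).2 hvbn
            · simp [hvb] at h; omega
        rw [dif_neg, hvbe]
        rintro ⟨g, hgm⟩
        rw [Finset.mem_filter] at hgm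
        have := hmin g hgm.1 hgm.2.1 hgm.2.2
        have := Finset.mem_Icc.mp hgm.1
        omega

lemma eq_idList (n : ℕ) (A : List Gene) (hA : ValidString n A) (hnone : none ∉ A)
    (hbt : bT n A = 0) (hall : ∀ x ∈ Finset.Icc 1 n, some x ∈ A) : A = idList n := by
  have hnd : A.Nodup := nodup_of_valid n A hA hnone
  have hidnd : (idList n).Nodup := by
    rw [idList]
    exact List.nodup_range.map (fun a b h => by injection h; omega)
  have hmem : ∀ g, g ∈ A ↔ g ∈ idList n := by
    intro g
    constructor
    · intro hg
      cases g with
      | none => exact absurd hg hnone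
      | some v =>
        have := hA.1 v hg
        rw [idList]
        simp only [List.mem_map, List.mem_range]
        exact ⟨v - 1, by omega, by congr 1; omega⟩
    · intro hg
      rw [idList] at hg
      simp only [List.mem_map, List.mem_range] at hg
      obtain ⟨i, hi, hgi⟩ := hg
      rw [← hgi]
      exact hall (i+1) (Finset.mem_Icc.mpr ⟨by omega, by omega⟩)
  have hperm : A.Perm (idList n) := (List.perm_ext_iff_of_nodup hnd hidnd).mpr hmem
  have hpwA : List.Pairwise ltv A := by
    have hpw := pairwise_ext n A hA hnone hbt
    have : A <+ extStr n A := by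
      rw [extStr]
      exact ((List.sublist_append_left A [some (n+1)]).cons _)
    exact List.Pairwise.sublist this hpw
  have hpwId : List.Pairwise ltv (idList n) := by
    rw [idList, List.pairwise_map]
    exact List.pairwise_lt_range.imp (fun h => by simp [ltv]; omega)
  exact List.Perm.eq_of_pairwise' hpwA hpwId hperm

lemma vgt_aux (x : ℕ) : ∀ (V : List Gene), List.Pairwise ltv V →
    (∀ v0, V.head? = some v0 → x < v0.getD 0) → ∀ e ∈ V, x < e.getD 0 := by
  intro V
  cases V with
  | nil => intro _ _ e he; simp at he
  | cons v0 V' =>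
    intro hpw hh e he
    have h0 : x < v0.getD 0 := hh v0 rfl
    rcases List.mem_cons.mp he with h | h
    · rw [h]; exact h0
    · exact lt_trans h0 ((List.pairwise_cons.mp hpw).1 e h)

lemma case_ins (n : ℕ) (A : List Gene) (hA : ValidString n A) (hnone : none ∉ A)
    (hbt : bT n A = 0) (hne : A ≠ idList n) :
    ∃ A', InsN n A A' ∧ ValidString n A' ∧ bT n A' = 0 ∧
      missingCount n A' < missingCount n A := by
  have hpw := pairwise_ext n A hA hnone hbt
  obtain ⟨x, hxI, hxA⟩ : ∃ x, x ∈ Finset.Icc 1 n ∧ some x ∉ A := by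
    by_contra h
    push_neg at h
    exact hne (eq_idList n A hA hnone hbt h)
  have hx1 : 1 ≤ x := (Finset.mem_Icc.mp hxI).1
  have hxn : x ≤ n := (Finset.mem_Icc.mp hxI).2
  set p : Gene → Bool := fun g => decide (g.getD 0 < x) with hp
  set U := A.takeWhile p with hU
  set V := A.dropWhile p with hV
  have hUV : A = U ++ V := (List.takeWhile_append_dropWhile (p := p) (l := A)).symm
  have hUlt : ∀ e ∈ U, e.getD 0 < x := by
    intro e he
    have := List.mem_takeWhile_imp he
    rw [hp] at this
    exact of_decide_eq_true this
  have hpwA : List.Pairwise ltv A := by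
    exact List.Pairwise.sublist (by rw [extStr]; exact (List.sublist_append_left A [some (n+1)]).cons _) hpw
  have hVgt : ∀ e ∈ V, x < e.getD 0 := by
    apply vgt_aux x V (List.Pairwise.sublist (List.dropWhile_sublist p (l := A)) hpwA)
    intro v0 hv0
    have hnp : p v0 = false := by
      have h2 := List.head?_dropWhile_not p A
      rw [← hV, hv0] at h2
      exact h2
    rw [hp] at hnp
    simp only [decide_eq_false_iff_not, not_lt] at hnp
    have hv0A : v0 ∈ A :=
      (List.dropWhile_sublist p (l := A)).subset
        (by rw [hV] at hv0; exact List.mem_of_mem_head? (Option.mem_def.mpr hv0))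
    cases v0 with
    | none => exact absurd hv0A hnone
    | some w =>
      simp only [Option.getD_some] at hnp ⊢
      rcases Nat.lt_or_ge x w with h | h
      · exact h
      · have : w = x := by omega
        rw [this] at hv0A
        exact absurd hv0A hxA
  have hvalid : ValidString n (U ++ some x :: V) := by
    constructor
    · intro y hy
      rcases List.mem_append.mp hy with h | h
      · exact hA.1 y (by rw [hUV]; exact List.mem_append.mpr (Or.inl h))
      · rcases List.mem_cons.mp h with h | h
        · have : y = x := by injection h
          omega
        · exact hA.1 y (by rw [hUV]; exact List.mem_append.mpr (Or.inr h))
    · intro y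
      have hcA : A.count (some y) = U.count (some y) + V.count (some y) := by
        rw [hUV, List.count_append]
      rw [List.count_append, List.count_cons]
      simp only [beq_iff_eq]
      by_cases hyx : y = x
      · subst hyx
        have h0 : A.count (some y) = 0 := List.count_eq_zero_of_not_mem hxA
        rw [if_pos rfl]
        omega
      · rw [if_neg (fun h => hyx (by injection h with h'; omega))]
        have := hA.2 y
        omega
  refine ⟨U ++ some x :: V, ⟨U.length, [some x], ?_, by simp, by simp, ?_, ?_⟩, hvalid, ?_, ?_⟩
  · rw [hUV]; simp
  · intro e he
    simp only [List.mem_singleton] at he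
    exact ⟨x, he, hx1, hxn, hxA⟩
  · rw [hUV, List.take_left, List.drop_left]
    simp
  · -- bT = 0
    apply sorted_bT_zero n _ hvalid ?_ ?_
    · intro h
      rcases List.mem_append.mp h with h | h
      · exact hnone (by rw [hUV]; exact List.mem_append.mpr (Or.inl h))
      · rcases List.mem_cons.mp h with h | h
        · simp at h
        · exact hnone (by rw [hUV]; exact List.mem_append.mpr (Or.inr h))
    · have hsplit : extStr n (U ++ some x :: V)
          = (some 0 :: U) ++ (some x :: (V ++ [some (n+1)])) := by
        rw [extStr]; simp
      rw [hsplit]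
      apply List.pairwise_append.mpr
      refine ⟨?_, ?_, ?_⟩
      · have hsub : (some 0 :: U) <+ extStr n A := by
          rw [extStr, hUV]
          exact (((List.sublist_append_left U V).trans
            (List.sublist_append_left (U ++ V) [some (n+1)])).cons₂ _)
        exact List.Pairwise.sublist hsub hpw
      · apply List.pairwise_cons.mpr
        constructor
        · intro e he
          rcases List.mem_append.mp he with h | h
          · exact hVgt e h
          · simp only [List.mem_singleton] at h
            rw [h]
            simp only [ltv, Option.getD_some]
            omega
        · have hsub : (V ++ [some (n+1)]) <+ extStr n A := by
            rw [extStr, hUV, List.append_assoc]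
            exact (List.sublist_append_right U (V ++ [some (n+1)])).cons _
          exact List.Pairwise.sublist hsub hpw
      · intro a ha b hb
        have hax : a.getD 0 < x := by
          rcases List.mem_cons.mp ha with h | h
          · rw [h]; simpa using (show 0 < x by omega)
          · exact hUlt a h
        have hxb : x ≤ b.getD 0 := by
          rcases List.mem_cons.mp hb with h | h
          · rw [h]; simp
          · rcases List.mem_append.mp h with h | h
            · exact le_of_lt (hVgt b h)
            · simp only [List.mem_singleton] at h
              rw [h]
              simp only [Option.getD_some]
              omega
        exact lt_of_lt_of_le hax hxb
  · -- missing decreases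
    have hsub : (Finset.Icc 1 n).filter (fun y => some y ∉ (U ++ some x :: V))
        ⊆ (Finset.Icc 1 n).filter (fun y => some y ∉ A) := by
      intro y hy
      rw [Finset.mem_filter] at hy ⊢
      refine ⟨hy.1, fun h => hy.2 ?_⟩
      rw [hUV] at h
      rcases List.mem_append.mp h with h | h
      · exact List.mem_append.mpr (Or.inl h)
      · exact List.mem_append.mpr (Or.inr (List.mem_cons_of_mem _ h))
    apply Finset.card_lt_card
    rw [Finset.ssubset_iff_of_subset hsub]
    refine ⟨x, Finset.mem_filter.mpr ⟨hxI, hxA⟩, fun h => ?_⟩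
    exact (Finset.mem_filter.mp h).2 (by simp)

/-! case 2 : transposition -/

lemma getLast_eq_snoc (L M : List Gene) (a : Gene) (h : L = M ++ [a]) (hne : L ≠ []) :
    L.getLast hne = a := by subst h; exact List.getLast_concat

lemma snoc_last_suffix (L R N : List Gene) (a : Gene) (hR : R ≠ []) (h : L ++ R = N ++ [a]) :
    R.getLast hR = a := by
  have h1 : (L ++ R).getLast (by simp [hR]) = a := getLast_eq_snoc _ _ _ h.symm.symm _
  have h2 : (L ++ R).getLast (by simp [hR]) = R.getLast hR := List.getLast_append_of_ne_nil _ hR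
  rw [← h2]
  exact h1

lemma snoc_mem_suffix (L R N : List Gene) (a : Gene) (hR : R ≠ []) (h : L ++ R = N ++ [a]) :
    a ∈ R := by
  have h3 := snoc_last_suffix L R N a hR h
  rw [← h3]
  exact List.getLast_mem hR

set_option maxHeartbeats 2000000 in
lemma case_tra (n : ℕ) (A : List Gene) (hA : ValidString n A) (hnone : none ∉ A)
    (hbt : bT n A ≠ 0) :
    ∃ A', TranspN A A' ∧ ValidString n A' ∧ missingCount n A' = missingCount n A ∧
      bT n A' < bT n A := by
  have hnd : (extStr n A).Nodup := nodup_ext n A hA hnone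
  have hchainnot : ¬ List.IsChain (fun a b => postOf n A a = b) (extStr n A) :=
    fun h => hbt (by rw [bT_eq_bpc]; exact bpc_eq_zero_of_chain _ _ h)
  obtain ⟨c, u, r, hsplit, hch1, hbr1⟩ := mcp (postOf n A) (extStr n A) (by simp [extStr])
  obtain ⟨z, R1, hr, hfz⟩ : ∃ z R1, r = z :: R1 ∧ postOf n A u ≠ z := by
    rcases hbr1 with h | ⟨s, r', hsr, hfs⟩
    · exfalso
      apply hchainnot
      rw [hsplit, h]
      simpa using hch1
    · exact ⟨s, r', hsr, hfs⟩
  have hext2 : extStr n A = (c ++ [u]) ++ z :: R1 := by rw [hsplit, hr]; simp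
  -- head of the chain is (some 0)
  obtain ⟨C1t, hC1t⟩ : ∃ t, c ++ [u] = some 0 :: t := by
    cases c with
    | nil =>
      have h : extStr n A = u :: r := by simpa using hsplit
      rw [extStr] at h
      have : u = some 0 := by injection h with h1 _; exact h1.symm
      exact ⟨[], by simp [this]⟩
    | cons c0 c' =>
      have h : extStr n A = c0 :: (c' ++ u :: r) := by simpa using hsplit
      rw [extStr] at h
      have : c0 = some 0 := by injection h with h1 _; exact h1.symm
      exact ⟨c' ++ [u], by simp [this]⟩
  have hAq : A ++ [some (n+1)] = C1t ++ z :: R1 := by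
    have h := hext2
    rw [hC1t, extStr] at h
    have h2 : some 0 :: (A ++ [some (n+1)]) = some 0 :: (C1t ++ z :: R1) := by
      rw [h]; simp
    injection h2 with _ h3
  -- C1t elements lie in A
  have hC1tA : ∀ e ∈ C1t, e ∈ A := by
    intro e he
    have hpre1 : C1t <+: A ++ [some (n+1)] := ⟨z :: R1, hAq.symm⟩
    have hpre2 : A <+: A ++ [some (n+1)] := ⟨[some (n+1)], rfl⟩
    have hlen : C1t.length ≤ A.length := by
      have := congrArg List.length hAq
      simp at this
      omega
    exact (List.prefix_of_prefix_length_le hpre1 hpre2 hlen).subset he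
  have hallC1 : ∀ e ∈ c ++ [u], ∃ v, e = some v ∧ v ≤ n := by
    intro e he
    rw [hC1t] at he
    rcases List.mem_cons.mp he with h | h
    · exact ⟨0, h, by omega⟩
    · have heA := hC1tA e h
      cases e with
      | none => exact absurd heA hnone
      | some v => exact ⟨v, rfl, (hA.1 v heA).2⟩
  have hC1ne : c ++ [u] ≠ [] := by simp
  have hheadC1 : (c ++ [u]).head hC1ne = some 0 := by
    have h1 : (c ++ [u]).head? = some (some 0) := by rw [hC1t]; rfl
    rw [List.head?_eq_head hC1ne, Option.some_inj] at h1
    exact h1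
  have hlastC1 : (c ++ [u]).getLast hC1ne = u := List.getLast_concat
  obtain ⟨uv, huv, huvn⟩ : ∃ v, u = some v ∧ v ≤ n := hallC1 u (by simp)
  obtain ⟨cv, hcv⟩ := post_isSome n A uv
  -- nodup decomposition  (3 parts : C1, z::R1)
  have hnd2 : ((c ++ [u]) ++ z :: R1).Nodup := by rw [← hext2]; exact hnd
  obtain ⟨hndC1, hndr, hdisj1⟩ := List.nodup_append'.mp hnd2
  -- rule out : postOf u = n+1 with empty filter
  have hcvA : cv ∈ Finset.Icc 1 n ∧ (some cv : Gene) ∈ A ∧ uv < cv := by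
    rcases post_cases n A uv cv hcv with h | ⟨hcv1, hnoc⟩
    · exact h
    · exfalso
      -- z must be a common label
      have hzne0 : z ≠ some 0 := by
        intro h
        refine hdisj1 (a := z) ?_ (by simp)
        rw [hC1t, h]
        simp
      have hzneq : z ≠ some (n+1) := by
        intro h
        apply hfz
        rw [huv, hcv, hcv1, h]
      have hzA : z ∈ A := by
        have hzext : z ∈ extStr n A := by rw [hext2]; simp
        rw [extStr] at hzext
        rcases List.mem_cons.mp hzext with h | h
        · exact absurd h hzne0
        · rcases List.mem_append.mp h with h | h
          · exact h
          · simp at h; exact absurd h hzneq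
      obtain ⟨zv, hzv⟩ : ∃ zv, z = some zv := by
        cases z with
        | none => exact absurd hzA hnone
        | some v => exact ⟨v, rfl⟩
      rw [hzv] at hzA
      have hzb := hA.1 zv hzA
      rcases cov n A (c ++ [u]) hch1 hC1ne 0 hheadC1 zv
          (Finset.mem_Icc.mpr ⟨hzb.1, hzb.2⟩) hzA (by omega) with h | ⟨lv, hl, hlv⟩
      · exact hdisj1 (a := z) (by rw [hzv]; exact h) (by simp)
      · rw [hlastC1, huv] at hl
        have : lv = uv := by injection hl with h'; omega
        exact hnoc zv (Finset.mem_Icc.mpr ⟨hzb.1, hzb.2⟩) hzA (by omega)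
  obtain ⟨hcvI, hcvmA, hucv⟩ := hcvA
  -- y = some cv is in R1
  have hynotC1 : (some cv : Gene) ∉ c ++ [u] := by
    intro h
    obtain ⟨lv, hl, hle⟩ := lastmax n A (c ++ [u]) hch1 hallC1 hC1ne cv h
    rw [hlastC1, huv] at hl
    have : lv = uv := by injection hl with h'; omega
    omega
  have hyR1 : (some cv : Gene) ∈ R1 := by
    have hyext : (some cv : Gene) ∈ extStr n A := by rw [extStr]; simp [hcvmA]
    rw [hext2] at hyext
    rcases List.mem_append.mp hyext with h | h
    · exact absurd h hynotC1
    · rcases List.mem_cons.mp h with h | h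
      · exfalso; apply hfz; rw [huv, hcv, h]
      · exact h
  obtain ⟨B', R2, hR1⟩ := List.append_of_mem hyR1
  have hext3 : extStr n A = (c ++ [u]) ++ ((z :: B') ++ (some cv :: R2)) := by
    rw [hext2, hR1]; simp
  -- nodup decomposition of the 3-part split
  have hnd3 : ((c ++ [u]) ++ ((z :: B') ++ (some cv :: R2))).Nodup := by
    rw [← hext3]; exact hnd
  obtain ⟨_, hndr3, hdisj1'⟩ := List.nodup_append'.mp hnd3
  obtain ⟨hndB, hndY, hdisj2⟩ := List.nodup_append'.mp hndr3
  -- last of ext is q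
  have hextsnoc : extStr n A = (some 0 :: A) ++ [some (n+1)] := by rw [extStr]; simp
  have hYsnoc : ((c ++ [u]) ++ (z :: B')) ++ (some cv :: R2) = (some 0 :: A) ++ [some (n+1)] := by
    rw [show ((c ++ [u]) ++ (z :: B')) ++ (some cv :: R2)
        = (c ++ [u]) ++ ((z :: B') ++ (some cv :: R2)) by simp, ← hext3, hextsnoc]
  have hqY : (some (n+1) : Gene) ∈ some cv :: R2 :=
    snoc_mem_suffix _ _ _ _ (by simp) hYsnoc
  -- z is a common label (in both subcases)
  have hzne0 : z ≠ some 0 := by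
    intro h
    refine hdisj1' (a := z) ?_ (by simp)
    rw [hC1t, h]
    simp
  have hzneq : z ≠ some (n+1) := by
    intro h
    exact hdisj2 (a := z) (by simp) (by rw [h]; exact hqY)
  have hzA : z ∈ A := by
    have hzext : z ∈ extStr n A := by rw [hext2]; simp
    rw [extStr] at hzext
    rcases List.mem_cons.mp hzext with h | h
    · exact absurd h hzne0
    · rcases List.mem_append.mp h with h | h
      · exact h
      · simp at h; exact absurd h hzneq
  obtain ⟨zv, hzv⟩ : ∃ zv, z = some zv := by
    cases z with
    | none => exact absurd hzA hnone
    | some v => exact ⟨v, rfl⟩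
  rw [hzv] at hzA
  have hzb := hA.1 zv hzA
  have hzvI : zv ∈ Finset.Icc 1 n := Finset.mem_Icc.mpr ⟨hzb.1, hzb.2⟩
  -- second maximal chain
  obtain ⟨c₂, w, r₂, hsplit₂, hch₂, hbr₂⟩ := mcp (postOf n A) (some cv :: R2) (by simp)
  obtain ⟨Gt, hGt⟩ : ∃ t, c₂ ++ [w] = some cv :: t := by
    cases c₂ with
    | nil =>
      have : w = some cv := by
        have := hsplit₂
        simp at this
        exact this.1.symm
      exact ⟨[], by simp [this]⟩
    | cons g0 g' =>
      have : g0 = some cv := by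
        have := hsplit₂
        simp at this
        exact this.1.symm
      exact ⟨g' ++ [w], by simp [this]⟩
  obtain ⟨s, S', hr₂, hfw⟩ : ∃ s S', r₂ = s :: S' ∧ postOf n A w ≠ s := by
    rcases hbr₂ with h | ⟨s, r', hsr, hfs⟩
    · -- subcase : the second chain reaches the end — contradiction
      exfalso
      -- uv < zv by cov on first chain
      have huz : uv < zv := by
        rcases cov n A (c ++ [u]) hch1 hC1ne 0 hheadC1 zv hzvI hzA (by omega)
            with hm | ⟨lv, hl, hlv⟩
        · exact absurd hm (fun hm => hdisj1' (a := z) (by rw [hzv]; exact hm)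
            (List.mem_append.mpr (Or.inl (by simp))))
        · rw [hlastC1, huv] at hl
          have : lv = uv := by injection hl with h'; omega
          omega
      have hcz : cv ≤ zv := post_le n A uv cv zv hcv hzvI hzA huz
      have hczne : cv ≠ zv := by
        intro h
        exact hdisj2 (a := z) (by simp) (by rw [hzv, ← h]; simp)
      have hchY : List.IsChain (fun a b => postOf n A a = b) (some cv :: R2) := by
        have h9 : some cv :: R2 = c₂ ++ [w] := by rw [hsplit₂, h] <;> simp
        rw [h9] <;> exact hch₂
      rcases cov n A (some cv :: R2) hchY (by simp) cv rfl zv hzvI hzA (by omega)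
          with hm | ⟨lv, hl, hlv⟩
      · exact hdisj2 (a := z) (by simp) (by rw [hzv]; exact hm)
      · have hlY : (some cv :: R2).getLast (by simp) = some (n+1) :=
          snoc_last_suffix _ _ _ _ (by simp) hYsnoc
        have hlv2 : some lv = (some (n+1) : Gene) := by
          rw [← hl] <;> exact hlY
        have : lv = n + 1 := by injection hlv2 with h' <;> omega
        have := Finset.mem_Icc.mp hzvI
        omega
    · exact ⟨s, r', hsr, hfs⟩
  -- full 4-part decomposition
  have hext4 : extStr n A = (c ++ [u]) ++ ((z :: B') ++ ((c₂ ++ [w]) ++ (s :: S'))) := by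
    rw [hext3, hsplit₂, hr₂]; simp
  have hnd4 : ((c ++ [u]) ++ ((z :: B') ++ ((c₂ ++ [w]) ++ (s :: S')))).Nodup := by
    rw [← hext4]; exact hnd
  obtain ⟨_, hndr4, hdisj41⟩ := List.nodup_append'.mp hnd4
  obtain ⟨hndB4, hndr42, hdisj42⟩ := List.nodup_append'.mp hndr4
  obtain ⟨hndG4, hndT4, hdisj43⟩ := List.nodup_append'.mp hndr42
  -- q is the last of T
  have hneT : s :: S' ≠ [] := by simp
  have hTsnoc : ((c ++ [u]) ++ ((z :: B') ++ (c₂ ++ [w]))) ++ (s :: S')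
      = (some 0 :: A) ++ [some (n+1)] := by
    rw [show ((c ++ [u]) ++ ((z :: B') ++ (c₂ ++ [w]))) ++ (s :: S')
        = (c ++ [u]) ++ ((z :: B') ++ ((c₂ ++ [w]) ++ (s :: S'))) by simp, ← hext4, hextsnoc]
  have hlastT : (s :: S').getLast hneT = some (n+1) :=
    snoc_last_suffix _ _ _ _ hneT hTsnoc
  have hT : s :: S' = (s :: S').dropLast ++ [some (n+1)] := by
    have h1 := (List.dropLast_append_getLast (l := s :: S') hneT).symm
    rw [hlastT] at h1
    exact h1
  -- decomposition of A itself
  have hAeq : A = C1t ++ ((z :: B') ++ ((c₂ ++ [w]) ++ (s :: S').dropLast)) := by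
    have h := hext4
    rw [hC1t, extStr] at h
    have h2 : A ++ [some (n+1)]
        = (C1t ++ ((z :: B') ++ ((c₂ ++ [w]) ++ (s :: S').dropLast))) ++ [some (n+1)] := by
      have h3 : some 0 :: (A ++ [some (n+1)])
          = some 0 :: (C1t ++ ((z :: B') ++ ((c₂ ++ [w]) ++ (s :: S')))) := by
        rw [h]; simp
      have h4 : A ++ [some (n+1)] = C1t ++ ((z :: B') ++ ((c₂ ++ [w]) ++ (s :: S'))) := by
        injection h3
      rw [h4]
      conv_lhs => rw [hT]
      simp
    exact List.append_cancel_right h2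
  set Td := (s :: S').dropLast with hTd
  -- the transposed string
  set A2 := C1t ++ ((c₂ ++ [w]) ++ ((z :: B') ++ Td)) with hA2
  have hmemiff : ∀ g : Gene, (g ∈ A2 ↔ g ∈ A) := by
    intro g
    rw [hA2, hAeq]
    simp only [List.mem_append]
    tauto
  have hpost : postOf n A2 = postOf n A :=
    (post_congr n A A2 (fun x => ((hmemiff (some x)).symm))).symm
  have hlenA : A.length = C1t.length + (z :: B').length + (c₂ ++ [w]).length + Td.length := by
    rw [hAeq]; simp [hTd]; omega
  refine ⟨A2, ⟨C1t.length + 1, C1t.length + (z :: B').length + 1,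
      C1t.length + (z :: B').length + (c₂ ++ [w]).length + 1,
      by omega, by simp, by simp, by omega, ?_⟩, ?_, ?_, ?_⟩
  · -- the transposition formula
    have e1 : A.take (C1t.length + 1 - 1) = C1t := by
      rw [hAeq]; exact List.take_left' (by omega)
    have e2 : A.drop (C1t.length + (z :: B').length + 1 - 1) = (c₂ ++ [w]) ++ Td := by
      have h : A = (C1t ++ (z :: B')) ++ ((c₂ ++ [w]) ++ Td) := by rw [hAeq]; simp
      rw [h]; exact List.drop_left' (by simp <;> omega)
    have e3 : A.drop (C1t.length + 1 - 1) = (z :: B') ++ ((c₂ ++ [w]) ++ Td) := by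
      rw [hAeq]; exact List.drop_left' (by omega)
    have e4 : A.drop (C1t.length + (z :: B').length + (c₂ ++ [w]).length + 1 - 1) = Td := by
      have h : A = ((C1t ++ (z :: B')) ++ (c₂ ++ [w])) ++ Td := by rw [hAeq]; simp
      rw [h]; exact List.drop_left' (by simp <;> omega)
    rw [e1, e2, e3, e4]
    have e5 : ((c₂ ++ [w]) ++ Td).take
        (C1t.length + (z :: B').length + (c₂ ++ [w]).length + 1 - (C1t.length + (z :: B').length + 1))
        = c₂ ++ [w] := List.take_left' (by omega)
    have e6 : ((z :: B') ++ ((c₂ ++ [w]) ++ Td)).take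
        (C1t.length + (z :: B').length + 1 - (C1t.length + 1)) = z :: B' :=
      List.take_left' (by omega)
    rw [e5, e6, hA2]
    simp
  · -- validity
    constructor
    · intro x hx
      exact hA.1 x ((hmemiff (some x)).mp hx)
    · intro x
      have h1 : A2.count (some x)
          = C1t.count (some x) + ((z :: B').count (some x)
            + ((c₂ ++ [w]).count (some x) + Td.count (some x))) := by
        rw [hA2]
        simp only [List.count_append] <;> omega
      have h2 : A.count (some x)
          = C1t.count (some x) + ((z :: B').count (some x)
            + ((c₂ ++ [w]).count (some x) + Td.count (some x))) := by
        rw [hAeq]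
        simp only [List.count_append] <;> omega
      have := hA.2 x
      omega
  · exact (missing_congr n A A2 (fun x => ((hmemiff (some x)).symm))).symm
  · -- breakpoint count decreases
    -- elements of z::B' are in A
    have hBsub : ∀ e ∈ z :: B', e ∈ A := by
      intro e he
      have heext : e ∈ extStr n A := by
        rw [hext4]
        simp only [List.mem_append, List.mem_cons] at he ⊢
        tauto
      rw [extStr] at heext
      rcases List.mem_cons.mp heext with h | h
      · exfalso
        refine hdisj41 (a := e) ?_ (List.mem_append.mpr (Or.inl he))
        rw [hC1t, h]
        simp
      · rcases List.mem_append.mp h with h | h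
        · exact h
        · exfalso
          simp at h
          apply hdisj42 (a := e) he
          apply List.mem_append.mpr
          right
          rw [h, ← hlastT]
          exact List.getLast_mem hneT
    -- p' : the last element of z :: B'
    obtain ⟨p', B₀, hB₀, hp'⟩ : ∃ p' B₀, z :: B' = B₀ ++ [p'] ∧ p' ∈ z :: B' := by
      refine ⟨(z :: B').getLast (by simp), (z :: B').dropLast,
        (List.dropLast_append_getLast _).symm, List.getLast_mem _⟩
    obtain ⟨pv, hpv⟩ : ∃ pv, p' = some pv := by
      cases hp'' : p' with
      | none => rw [hp''] at hp'; exact absurd (hBsub _ hp') hnone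
      | some v => exact ⟨v, rfl⟩
    rw [hpv] at hp'
    have hpA : (some pv : Gene) ∈ A := hBsub _ hp'
    have hpb := hA.1 pv hpA
    have hpvI : pv ∈ Finset.Icc 1 n := Finset.mem_Icc.mpr ⟨hpb.1, hpb.2⟩
    -- key claim : postOf p' ≠ some cv
    have hfp' : postOf n A (some pv) ≠ some cv := by
      intro hctr
      have hpvcv : pv ≠ cv := by
        intro h
        apply hdisj42 (a := some pv) hp'
        apply List.mem_append.mpr (Or.inl _)
        rw [hGt, h]; simp
      have hpvcv' : pv < cv := by
        rcases post_cases n A pv cv hctr with h | ⟨h1, _⟩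
        · exact h.2.2
        · have := Finset.mem_Icc.mp hcvI; omega
      rcases Nat.lt_trichotomy pv uv with h | h | h
      · -- pv < uv : u is a common label (u ≠ some 0 since uv ≥ pv ≥ 1... )
        have huA : (some uv : Gene) ∈ A := by
          have h8 : u ∈ some 0 :: C1t := by rw [← hC1t]; simp
          rcases List.mem_cons.mp h8 with hh | hh
          · exfalso
            rw [huv] at hh
            have : uv = 0 := by injection hh with h9 <;> omega
            have := Finset.mem_Icc.mp hpvI
            omega
          · rw [← huv]; exact hC1tA u hh
        have huvI : uv ∈ Finset.Icc 1 n := by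
          have := hA.1 uv huA
          exact Finset.mem_Icc.mpr ⟨this.1, this.2⟩
        have := post_le n A pv cv uv hctr huvI huA h
        omega
      · -- pv = uv : p' = u, contradicting disjointness
        apply hdisj41 (a := u) (by simp)
        apply List.mem_append.mpr (Or.inl _)
        rw [huv, ← h]
        exact hp'
      · -- uv < pv
        have := post_le n A uv cv pv hcv hpvI hpA h
        omega
    -- now the bpc computation
    have hufy : postOf n A u = some cv := by rw [huv]; exact hcv
    have hbT : bT n A = bpc (postOf n A) (c ++ [u])
        + ((1 + bpc (postOf n A) (z :: B'))
          + ((if postOf n A p' = some cv then 0 else 1)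
            + (1 + bpc (postOf n A) (s :: S')))) := by
      rw [bT_eq_bpc]
      have h1 : extStr n A = c ++ u :: ((z :: B') ++ ((c₂ ++ [w]) ++ (s :: S'))) := by
        rw [hext4]; simp
      rw [h1, bpc_split]
      congr 1
      have h2 : u :: ((z :: B') ++ ((c₂ ++ [w]) ++ (s :: S')))
          = (u :: B₀) ++ p' :: ((c₂ ++ [w]) ++ (s :: S')) := by
        rw [show u :: ((z :: B') ++ ((c₂ ++ [w]) ++ (s :: S')))
            = (u :: (z :: B')) ++ ((c₂ ++ [w]) ++ (s :: S')) by simp, hB₀]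
        simp
      rw [h2, bpc_split]
      congr 1
      · -- bpc ((u :: B₀) ++ [p']) = 1 + bpc (z :: B')
        have h3 : (u :: B₀) ++ [p'] = u :: (z :: B') := by rw [hB₀]; simp
        rw [h3, bpc_cons₂, if_neg hfz]
      · -- bpc (p' :: ((c₂ ++ [w]) ++ (s :: S')))
        have h4 : p' :: ((c₂ ++ [w]) ++ (s :: S')) = (p' :: c₂) ++ w :: (s :: S') := by simp
        rw [h4, bpc_split]
        congr 1
        · -- bpc ((p' :: c₂) ++ [w])
          have h5 : (p' :: c₂) ++ [w] = p' :: (some cv :: Gt) := by rw [← hGt]; simp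
          rw [h5, bpc_cons₂]
          have h6 : bpc (postOf n A) (some cv :: Gt) = 0 := by
            rw [← hGt]
            exact bpc_eq_zero_of_chain _ _ hch₂
          rw [h6, hpv]
          simp
        · rw [bpc_cons₂, if_neg hfw]
    have hbT' : bT n A2 ≤ bpc (postOf n A) (c ++ [u])
        + (((if postOf n A w = z then 0 else 1) + bpc (postOf n A) (z :: B'))
          + ((if postOf n A p' = s then 0 else 1) + bpc (postOf n A) (s :: S'))) := by
      rw [bT_eq_bpc, hpost]
      have h1 : extStr n A2 = c ++ u :: ((c₂ ++ [w]) ++ ((z :: B') ++ (s :: S'))) := by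
        rw [extStr, hA2]
        rw [show (some 0 : Gene) :: ((C1t ++ ((c₂ ++ [w]) ++ ((z :: B') ++ Td))) ++ [some (n+1)])
            = (some 0 :: C1t) ++ ((c₂ ++ [w]) ++ ((z :: B') ++ (Td ++ [some (n+1)]))) by simp]
        rw [← hC1t, ← hT]
        simp
      rw [h1, bpc_split]
      apply Nat.add_le_add
      · exact le_of_eq rfl
      · have h2 : u :: ((c₂ ++ [w]) ++ ((z :: B') ++ (s :: S')))
            = (u :: c₂) ++ w :: ((z :: B') ++ (s :: S')) := by simp
        rw [h2, bpc_split]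
        have h3 : bpc (postOf n A) ((u :: c₂) ++ [w]) = 0 := by
          have h4 : (u :: c₂) ++ [w] = u :: (some cv :: Gt) := by rw [← hGt]; simp
          rw [h4, bpc_cons₂, if_pos hufy]
          rw [show bpc (postOf n A) (some cv :: Gt) = 0 by
            rw [← hGt]; exact bpc_eq_zero_of_chain _ _ hch₂]
        have h5 : w :: ((z :: B') ++ (s :: S')) = (w :: B₀) ++ p' :: (s :: S') := by
          rw [show w :: ((z :: B') ++ (s :: S')) = (w :: (z :: B')) ++ (s :: S') by simp, hB₀]
          simp
        rw [h3, h5, bpc_split]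
        have h6 : bpc (postOf n A) ((w :: B₀) ++ [p']) = (if postOf n A w = z then 0 else 1)
            + bpc (postOf n A) (z :: B') := by
          have h7 : (w :: B₀) ++ [p'] = w :: (z :: B') := by rw [hB₀]; simp
          rw [h7, bpc_cons₂]
        rw [h6, bpc_cons₂]
        omega
    rw [hpv] at hbT
    rw [if_neg hfp'] at hbT
    have hle1 : (if postOf n A w = z then 0 else 1) ≤ 1 := by split <;> omega
    have hle2 : (if postOf n A p' = s then 0 else 1) ≤ 1 := by split <;> omega
    omega

lemma key_step (n : ℕ) (A : List Gene) (hA : ValidString n A) (hne : A ≠ idList n) :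
    ∃ op ∈ Mtra, ∃ A', strOpRel n op A A' ∧ ValidString n A' ∧
      bT n A' + missingCount n A' < bT n A + missingCount n A := by
  by_cases hmem : none ∈ A
  · obtain ⟨A', hdel, hval, hmiss, hbtlt⟩ := case_del n A hA hmem
    exact ⟨StrOp.del, by simp [Mtra], A', hdel, hval, by omega⟩
  · by_cases hbt : bT n A = 0
    · obtain ⟨A', hins, hval, hbt', hmiss⟩ := case_ins n A hA hmem hbt hne
      exact ⟨StrOp.ins, by simp [Mtra], A', hins, hval, by omega⟩
    · obtain ⟨A', htra, hval, hmiss, hbtlt⟩ := case_tra n A hA hmem hbt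
      exact ⟨StrOp.transp, by simp [Mtra], A', htra, hval, by omega⟩

lemma reach_aux (n : ℕ) : ∀ (k : ℕ) (A : List Gene), ValidString n A →
    bT n A + missingCount n A ≤ k → ∃ s, s ≤ k ∧ Reaches n Mtra s A := by
  intro k
  induction k with
  | zero =>
    intro A hA hle
    refine ⟨0, le_refl 0, ?_⟩
    show A = idList n
    by_contra h
    obtain ⟨op, _, A', _, _, hdec⟩ := key_step n A hA h
    omega
  | succ k ih =>
    intro A hA hle
    by_cases h : A = idList n
    · exact ⟨0, by omega, h⟩
    · obtain ⟨op, hop, A', hrel, hval, hdec⟩ := key_step n A hA h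
      obtain ⟨s, hs, hr⟩ := ih A' hval (by omega)
      exact ⟨s + 1, by omega, ⟨op, hop, A', hrel, hr⟩⟩

/-- For every classical instance `I = (A, ι^n)` of unsigned strings,
the string `A` can be transformed into `ι^n` by a sequence of at most
`b_τ(I) + |Σ_{ι^n} \ Σ_A|` transpositions, insertions and deletions; that is,
`d_{M^{φψ}_τ}(A, ι^n) ≤ b_τ(I) + |Σ_{ι^n} \ Σ_A|`. -/
theorem transposition_indel_distance_upper_bound
    (n : ℕ) (A : List Gene) (hA : ValidString n A) :
    distM n Mtra A ≤ ((bT n A + missingCount n A : ℕ) : ℕ∞) := by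
  obtain ⟨s, hs, hr⟩ := reach_aux n (bT n A + missingCount n A) A hA le_rfl
  have h1 : distM n Mtra A ≤ (s : ℕ∞) := by
    unfold distM
    exact sInf_le ⟨s, hr, rfl⟩
  exact le_trans h1 (by exact_mod_cast hs)
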